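/- For every real z with 0 < |z| < 1, (4/(3z³)) · [4z² + (z³ − 3z)·ln((1+z)/(1−z)) − 2·ln((1+z)(1−z))] = 8 · Σ_{k=0}^{∞} z^{2k+1}/((2k+1)(2k+3)(k+2)), and the series on the right converges absolutely. -/

import Mathlib

open Real

lemma gfs_hasSum (z : ℝ) (hz0 : z ≠ 0) (hz1 : |z| < 1) :
    HasSum (fun k : ℕ =>
        z ^ (2 * k + 1) / ((2 * (k : ℝ) + 1) * (2 * (k : ℝ) + 3) * ((k : ℝ) + 2)))
      ((Real.log ((1 + z) / (1 - z))) / 6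
        - ((Real.log ((1 + z) / (1 - z))) / 2 - z) / z ^ 2
        + (-Real.log (1 - z ^ 2) - z ^ 2) / (3 * z ^ 3)) := by
  have h1z : (0:ℝ) < 1 - z := by cases' abs_lt.1 hz1 with h h; linarith
  have h1z' : (0:ℝ) < 1 + z := by cases' abs_lt.1 hz1 with h h; linarith
  set L := Real.log ((1 + z) / (1 - z)) with hL
  have hLdef : L = Real.log (1 + z) - Real.log (1 - z) :=
    Real.log_div (by linarith) (by linarith)
  have hz2 : (z ^ 2) ≠ 0 := pow_ne_zero _ hz0
  have hz3 : (z ^ 3) ≠ 0 := pow_ne_zero _ hz0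
  -- A : sum of z^(2k+1)/(2k+1) = L/2
  have hA : HasSum (fun k : ℕ => z ^ (2 * k + 1) / (2 * (k : ℝ) + 1)) (L / 2) := by
    have h := (hasSum_log_sub_log_of_abs_lt_one hz1).div_const 2
    rw [← hLdef] at h
    convert h using 2 with k
    · rfl
    field_simp
  -- B : sum of z^(2k+1)/(2k+3) = (L/2 - z)/z^2
  have hB : HasSum (fun k : ℕ => z ^ (2 * k + 1) / (2 * (k : ℝ) + 3)) ((L / 2 - z) / z ^ 2) := by
    have hshift : HasSum (fun k : ℕ => z ^ (2 * (k + 1) + 1) / (2 * ((k:ℝ) + 1) + 1))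
        (L / 2 - z) := by
      have h2 := (hasSum_nat_add_iff' (f := fun k : ℕ => z ^ (2 * k + 1) / (2 * (k : ℝ) + 1))
        1).2 hA
      simp only [Finset.range_one, Finset.sum_singleton] at h2
      convert h2 using 2 with k
      · rfl
      · push_cast; ring_nf
      · norm_num
    have h' : HasSum (fun k : ℕ => z ^ 2 * (z ^ (2 * k + 1) / (2 * (k : ℝ) + 3)))
        (z ^ 2 * ((L / 2 - z) / z ^ 2)) := by
      have hval : z ^ 2 * ((L / 2 - z) / z ^ 2) = L / 2 - z := by
        rw [mul_comm, div_mul_cancel₀ _ hz2]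
      rw [hval]
      convert hshift using 1
      funext k
      have hk : (2 : ℝ) * k + 3 ≠ 0 := by positivity
      field_simp
      ring
    exact (hasSum_mul_left_iff hz2).1 h'
  -- C : sum of z^(2k+1)/(k+2) = (-log(1-z^2) - z^2)/z^3
  have hC : HasSum (fun k : ℕ => z ^ (2 * k + 1) / ((k : ℝ) + 2))
      ((-Real.log (1 - z ^ 2) - z ^ 2) / z ^ 3) := by
    have habs : |z ^ 2| < 1 := by
      rw [abs_pow]
      calc |z| ^ 2 ≤ |z| := by nlinarith [abs_nonneg z]
        _ < 1 := hz1
    have h0 : HasSum (fun n : ℕ => (z ^ 2) ^ (n + 1) / ((n : ℝ) + 1))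
        (-Real.log (1 - z ^ 2)) := hasSum_pow_div_log_of_abs_lt_one habs
    have hshift : HasSum (fun k : ℕ => (z ^ 2) ^ (k + 2) / ((k:ℝ) + 2))
        (-Real.log (1 - z ^ 2) - z ^ 2) := by
      have h2 := (hasSum_nat_add_iff' (f := fun n : ℕ => (z ^ 2) ^ (n + 1) / ((n : ℝ) + 1))
        1).2 h0
      simp only [Finset.range_one, Finset.sum_singleton] at h2
      convert h2 using 2 with k
      · rfl
      · push_cast; ring_nf
      · norm_num
    have h' : HasSum (fun k : ℕ => z ^ 3 * (z ^ (2 * k + 1) / ((k : ℝ) + 2)))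
        (z ^ 3 * ((-Real.log (1 - z ^ 2) - z ^ 2) / z ^ 3)) := by
      have hval : z ^ 3 * ((-Real.log (1 - z ^ 2) - z ^ 2) / z ^ 3)
          = -Real.log (1 - z ^ 2) - z ^ 2 := by
        rw [mul_comm, div_mul_cancel₀ _ hz3]
      rw [hval]
      convert hshift using 1
      funext k
      have hk : (k : ℝ) + 2 ≠ 0 := by positivity
      field_simp
      ring
    exact (hasSum_mul_left_iff hz3).1 h'
  have hcomb := ((hA.mul_left (1/3)).sub hB).add (hC.mul_left (1/3))
  have hfun : (fun k : ℕ =>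
      z ^ (2 * k + 1) / ((2 * (k : ℝ) + 1) * (2 * (k : ℝ) + 3) * ((k : ℝ) + 2)))
      = fun k : ℕ => 1 / 3 * (z ^ (2 * k + 1) / (2 * (k : ℝ) + 1))
          - z ^ (2 * k + 1) / (2 * (k : ℝ) + 3)
          + 1 / 3 * (z ^ (2 * k + 1) / ((k : ℝ) + 2)) := by
    funext k
    have h1 : (2 : ℝ) * k + 1 ≠ 0 := by positivity
    have h2 : (2 : ℝ) * k + 3 ≠ 0 := by positivity
    have h3 : (k : ℝ) + 2 ≠ 0 := by positivity
    field_simp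
    ring
  have hval : L / 6 - (L / 2 - z) / z ^ 2 + (-Real.log (1 - z ^ 2) - z ^ 2) / (3 * z ^ 3)
      = 1 / 3 * (L / 2) - (L / 2 - z) / z ^ 2
        + 1 / 3 * ((-Real.log (1 - z ^ 2) - z ^ 2) / z ^ 3) := by
    field_simp
    ring
  rw [hfun, hval]
  exact hcomb

theorem generating_function_series (z : ℝ) (hz0 : 0 < |z|) (hz1 : |z| < 1) :
    Summable (fun k : ℕ =>
      |z ^ (2 * k + 1) / ((2 * (k : ℝ) + 1) * (2 * (k : ℝ) + 3) * ((k : ℝ) + 2))|) ∧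
    (4 / (3 * z ^ 3)) *
        (4 * z ^ 2 + (z ^ 3 - 3 * z) * Real.log ((1 + z) / (1 - z))
          - 2 * Real.log ((1 + z) * (1 - z)))
      = 8 * ∑' k : ℕ,
          z ^ (2 * k + 1) / ((2 * (k : ℝ) + 1) * (2 * (k : ℝ) + 3) * ((k : ℝ) + 2)) := by
  have hzne : z ≠ 0 := by simpa [abs_pos] using hz0
  have hS := gfs_hasSum z hzne hz1
  constructor
  · refine Summable.of_nonneg_of_le (fun k => abs_nonneg _) (fun k => ?_)
      (summable_geometric_of_lt_one (abs_nonneg z) hz1)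
    have hk : (0:ℝ) ≤ (k:ℝ) := Nat.cast_nonneg k
    have h1 : (0:ℝ) < (2 * (k:ℝ) + 1) * (2 * (k : ℝ) + 3) * ((k : ℝ) + 2) := by positivity
    rw [abs_div, abs_pow, abs_of_pos h1]
    have h12 : (1:ℝ) ≤ (2 * (k:ℝ) + 1) * (2 * (k : ℝ) + 3) := by nlinarith
    have hone : (1:ℝ) ≤ (2 * (k:ℝ) + 1) * (2 * (k : ℝ) + 3) * ((k : ℝ) + 2) := by nlinarith
    calc |z| ^ (2 * k + 1) / ((2 * (k:ℝ) + 1) * (2 * (k : ℝ) + 3) * ((k : ℝ) + 2))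
        ≤ |z| ^ (2 * k + 1) / 1 := by gcongr
      _ = |z| ^ (2 * k + 1) := by ring
      _ ≤ |z| ^ k := pow_le_pow_of_le_one (abs_nonneg z) hz1.le (by omega)
  · rw [hS.tsum_eq]
    have h1z : (0:ℝ) < 1 - z := by cases' abs_lt.1 hz1 with h h; linarith
    have h1z' : (0:ℝ) < 1 + z := by cases' abs_lt.1 hz1 with h h; linarith
    have hlog : Real.log ((1 + z) * (1 - z)) = Real.log (1 - z ^ 2) := by ring_nf
    rw [hlog]
    field_simp
    ring
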